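/- Let τ ⊆ ℕ be an infinite set. Then U_τ(T,E) ∪ {0} contains an 𝔽-vector subspace of H(T,E) that is dense in H(T,E); i.e., there is a dense linear subspace A of H(T,E) with A \ {0} ⊆ U_τ(T,E). -/

import Mathlib

open MeasureTheory Filter Topology

/-- A rooted tree with finite levels `T n`, a singleton root level, a parent map,
and at least two children for every vertex. -/
structure TreeData where
  T : ℕ → Type
  fint : ∀ n, Fintype (T n)
  rootSubsingleton : ∀ x y : T 0, x = y
  rootNonempty : Nonempty (T 0)
  par : ∀ n, T (n + 1) → T n
  twoChildren : ∀ n (x : T n), 2 ≤ Nat.card {y : T (n + 1) // par n y = x}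

instance (D : TreeData) (n : ℕ) : Fintype (D.T n) := D.fint n

noncomputable instance (D : TreeData) (n : ℕ) (x : D.T n) :
    Fintype {y : D.T (n + 1) // D.par n y = x} := by
  classical exact Subtype.fintype _

/-- The set of vertices of the tree. -/
def TreeData.Vert (D : TreeData) : Type := Σ n, D.T n

/-- The boundary `∂T` : infinite geodesics starting at the root. -/
def TreeData.Boundary (D : TreeData) : Type :=
  {e : ∀ n, D.T n // ∀ n, D.par n (e (n + 1)) = e n}

/-- The boundary sector `B_x` of geodesics through `x`. -/
def TreeData.sector (D : TreeData) (n : ℕ) (x : D.T n) : Set D.Boundary :=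
  {e | e.1 n = x}

/-- The σ-algebra `M_m` generated by the sectors at level `m`. -/
def TreeData.levelMS (D : TreeData) (m : ℕ) : MeasurableSpace D.Boundary :=
  MeasurableSpace.generateFrom {s | ∃ x : D.T m, s = D.sector m x}

/-- The σ-algebra `M` generated by all boundary sectors. -/
instance TreeData.boundaryMS (D : TreeData) : MeasurableSpace D.Boundary :=
  MeasurableSpace.generateFrom {s | ∃ n, ∃ x : D.T n, s = D.sector n x}

/-- The probability `∏_{j<n} q(y_j, y_{j+1})` of the path from the root to a vertex. -/
def TreeData.pathProb (D : TreeData) (q : ∀ n, D.T (n + 1) → ℝ) :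
    ∀ n, D.T n → ℝ
  | 0, _ => 1
  | n + 1, y => D.pathProb q n (D.par n y) * q n y

/-- `f : T → E` is generalized harmonic: `f x = ∑_{y ∈ S x} w x y • f y`. -/
def TreeData.Harmonic (D : TreeData) {𝔽 E : Type} [Field 𝔽] [AddCommGroup E]
    [Module 𝔽 E] (w : ∀ n, D.T (n + 1) → 𝔽) (f : D.Vert → E) : Prop :=
  ∀ n (x : D.T n),
    f ⟨n, x⟩ = ∑ y : {y : D.T (n + 1) // D.par n y = x}, w n y.1 • f ⟨n + 1, y.1⟩

/-- The set `H(T,E)` of generalized harmonic functions. -/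
def TreeData.harmonicSet (D : TreeData) {𝔽 : Type} (E : Type) [Field 𝔽] [AddCommGroup E]
    [Module 𝔽 E] (w : ∀ n, D.T (n + 1) → 𝔽) : Set (D.Vert → E) :=
  {f | D.Harmonic w f}

/-- `ω_n(f) : ∂T → E`. -/
def TreeData.omegaMap (D : TreeData) {E : Type} (f : D.Vert → E) (n : ℕ)
    (e : D.Boundary) : E := f ⟨n, e.1 n⟩

/-- The pseudometric of convergence in probability associated to a distance `ρ`. -/
noncomputable def TreeData.dPgen (D : TreeData) (P : Measure D.Boundary) {α : Type}
    (ρ : α → α → ℝ) (h g : D.Boundary → α) : ℝ :=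
  ∫ e, ρ (h e) (g e) / (1 + ρ (h e) (g e)) ∂P

/-- The metric `d_ℙ` of convergence in probability on `L⁰(∂T, E)`. -/
noncomputable def TreeData.dP (D : TreeData) (P : Measure D.Boundary) {E : Type}
    [MetricSpace E] (h g : D.Boundary → E) : ℝ :=
  D.dPgen P dist h g

/-- The translation invariant metric `d̃` on `E ^ ℕ` inducing the product topology. -/
noncomputable def dTilde {E : Type} [MetricSpace E] (x y : ℕ → E) : ℝ :=
  ∑' n : ℕ, (1 / 2 : ℝ) ^ n * (dist (x n) (y n) / (1 + dist (x n) (y n)))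

/-- Lower density of a set of natural numbers. -/
noncomputable def lowerDensity (A : Set ℕ) : ℝ :=
  Filter.liminf (fun N : ℕ => ((A ∩ Set.Iio N).ncard : ℝ) / N) Filter.atTop

/-- Upper density of a set of natural numbers. -/
noncomputable def upperDensity (A : Set ℕ) : ℝ :=
  Filter.limsup (fun N : ℕ => ((A ∩ Set.Iio N).ncard : ℝ) / N) Filter.atTop

/-- `f ∈ U_τ(T,E)` : the family `(ω_n f)_{n ∈ τ}` is dense in `L⁰(∂T,E)`. -/
def TreeData.UnivOn (D : TreeData) (P : Measure D.Boundary) {E : Type}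
    [MetricSpace E] [MeasurableSpace E] (τ : Set ℕ) (f : D.Vert → E) : Prop :=
  ∀ h : D.Boundary → E, Measurable h → ∀ ε > 0, ∃ n ∈ τ, D.dP P (D.omegaMap f n) h < ε

/-- `f ∈ U_FM(T,E)` : for every nonempty open subset `V` of `L⁰(∂T,E)` (equivalently,
every ball) the set `{n | ω_n f ∈ V}` has strictly positive lower density. -/
def TreeData.FreqUniv (D : TreeData) (P : Measure D.Boundary) {E : Type}
    [MetricSpace E] [MeasurableSpace E] (f : D.Vert → E) : Prop :=
  ∀ h : D.Boundary → E, Measurable h → ∀ ε > 0,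
    0 < lowerDensity {n | D.dP P (D.omegaMap f n) h < ε}

/-- `f ∈ U_FM^τ(T,E)` for `τ` enumerated by `ns`. -/
def TreeData.FreqUnivAlong (D : TreeData) (P : Measure D.Boundary) {E : Type}
    [MetricSpace E] [MeasurableSpace E] (ns : ℕ → ℕ) (f : D.Vert → E) : Prop :=
  ∀ h : D.Boundary → E, Measurable h → ∀ ε > 0,
    0 < lowerDensity {k | D.dP P (D.omegaMap f (ns k)) h < ε}

/-- `f ∈ X(T,E)` : for every nonempty open subset `V` of `L⁰(∂T,E)` (equivalently,
every ball) the set `{n | ω_n f ∈ V}` has upper density `1`. -/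
def TreeData.UpperUniv (D : TreeData) (P : Measure D.Boundary) {E : Type}
    [MetricSpace E] [MeasurableSpace E] (f : D.Vert → E) : Prop :=
  ∀ h : D.Boundary → E, Measurable h → ∀ ε > 0,
    upperDensity {n | D.dP P (D.omegaMap f n) h < ε} = 1

/-- `f ∈ U_FM(T, E^ℕ)` where `E^ℕ` carries the metric `d̃`. -/
def TreeData.FreqUnivPi (D : TreeData) (P : Measure D.Boundary) {E : Type}
    [MetricSpace E] [MeasurableSpace E] (f : D.Vert → (ℕ → E)) : Prop :=
  ∀ h : D.Boundary → (ℕ → E), Measurable h → ∀ ε > 0,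
    0 < lowerDensity {n | D.dPgen P dTilde (D.omegaMap f n) h < ε}

variable {𝔽 E : Type} [Field 𝔽] [TopologicalSpace 𝔽] [T2Space 𝔽]
  [TopologicalSpace.SeparableSpace 𝔽] [ContinuousAdd 𝔽] [ContinuousInv₀ 𝔽]
  [AddCommGroup E] [Module 𝔽 E] [MetricSpace E]
  [TopologicalSpace.SeparableSpace E] [ContinuousAdd E] [ContinuousSMul 𝔽 E]
  [MeasurableSpace E] [BorelSpace E]
namespace AuxUniv

variable {D : TreeData}

lemma levelNonempty (D : TreeData) : ∀ n, Nonempty (D.T n)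
  | 0 => D.rootNonempty
  | n+1 => by
      obtain ⟨x⟩ := levelNonempty D n
      have h2 := D.twoChildren n x
      have hpos : 0 < Nat.card {y : D.T (n+1) // D.par n y = x} := by omega
      rcases (Nat.card_pos_iff.mp hpos).1 with ⟨y, _⟩
      exact ⟨y⟩

noncomputable instance (D : TreeData) (n : ℕ) : Inhabited (D.T n) :=
  ⟨Classical.choice (levelNonempty D n)⟩

instance instMS (D : TreeData) (n : ℕ) : MeasurableSpace (D.T n) := ⊤

/-- There is a child with transition probability at most 1/2. -/
lemma exists_small_child (D : TreeData) (q : ∀ n, D.T (n + 1) → ℝ)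
    (hq0 : ∀ n y, 0 < q n y)
    (hq1 : ∀ n (x : D.T n), ∑ y : {y : D.T (n + 1) // D.par n y = x}, q n y.1 = 1)
    (n : ℕ) (x : D.T n) :
    ∃ y : D.T (n+1), D.par n y = x ∧ q n y ≤ 1/2 := by
  by_contra h
  push_neg at h
  have hcard : 2 ≤ (Finset.univ : Finset {y : D.T (n+1) // D.par n y = x}).card := by
    have := D.twoChildren n x
    rwa [Nat.card_eq_fintype_card, ← Finset.card_univ] at this
  have hne : (Finset.univ : Finset {y : D.T (n+1) // D.par n y = x}).Nonempty := by
    rw [← Finset.card_pos]; omega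
  have hlt : (Finset.univ : Finset {y : D.T (n+1) // D.par n y = x}).card • (1/2 : ℝ)
      < ∑ y : {y : D.T (n+1) // D.par n y = x}, q n y.1 := by
    have := Finset.sum_lt_sum_of_nonempty hne (f := fun _ => (1/2 : ℝ))
      (g := fun y => q n y.1) (fun y _ => h y.1 y.2)
    rwa [Finset.sum_const] at this
  rw [hq1 n x] at hlt
  have : (1 : ℝ) ≤ (Finset.univ : Finset {y : D.T (n+1) // D.par n y = x}).card • (1/2 : ℝ) := by
    rw [nsmul_eq_mul]
    have : (2 : ℝ) ≤ (Finset.univ : Finset {y : D.T (n+1) // D.par n y = x}).card := by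
      exact_mod_cast hcard
    linarith
  linarith

end AuxUniv


section Chunk2

variable {D : TreeData}

/-- Casting between equal levels. -/
def tc {a b : ℕ} (h : a = b) (x : D.T a) : D.T b := h ▸ x

@[simp] lemma tc_rfl {a : ℕ} (h : a = a) (x : D.T a) : tc h x = x := rfl

noncomputable def mchild (q : ∀ n, D.T (n + 1) → ℝ) (hq0 : ∀ n y, 0 < q n y)
    (hq1 : ∀ n (x : D.T n), ∑ y : {y : D.T (n + 1) // D.par n y = x}, q n y.1 = 1)
    (n : ℕ) (x : D.T n) : D.T (n+1) :=
  (AuxUniv.exists_small_child D q hq0 hq1 n x).choose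

lemma mchild_par (q : ∀ n, D.T (n + 1) → ℝ) (hq0 : ∀ n y, 0 < q n y)
    (hq1 : ∀ n (x : D.T n), ∑ y : {y : D.T (n + 1) // D.par n y = x}, q n y.1 = 1)
    (n : ℕ) (x : D.T n) : D.par n (mchild q hq0 hq1 n x) = x :=
  (AuxUniv.exists_small_child D q hq0 hq1 n x).choose_spec.1

lemma mchild_q (q : ∀ n, D.T (n + 1) → ℝ) (hq0 : ∀ n y, 0 < q n y)
    (hq1 : ∀ n (x : D.T n), ∑ y : {y : D.T (n + 1) // D.par n y = x}, q n y.1 = 1)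
    (n : ℕ) (x : D.T n) : q n (mchild q hq0 hq1 n x) ≤ 1/2 :=
  (AuxUniv.exists_small_child D q hq0 hq1 n x).choose_spec.2

variable {𝔽' E' : Type} [Field 𝔽'] [AddCommGroup E'] [Module 𝔽' E']

/-- One-step harmonic "descent" operator. -/
noncomputable def phi (w : ∀ n, D.T (n + 1) → 𝔽') (l : ℕ) (u : D.T (l+1) → E') : D.T l → E' :=
  fun x => ∑ y : {y : D.T (l+1) // D.par l y = x}, w l y.1 • u y.1

lemma phi_add (w : ∀ n, D.T (n + 1) → 𝔽') (l : ℕ) (u v : D.T (l+1) → E') :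
    phi w l (u + v) = phi w l u + phi w l v := by
  funext x
  simp [phi, Finset.sum_add_distrib, smul_add]

lemma phi_smul (w : ∀ n, D.T (n + 1) → 𝔽') (l : ℕ) (c : 𝔽') (u : D.T (l+1) → E') :
    phi w l (c • u) = c • phi w l u := by
  funext x
  simp only [phi, Pi.smul_apply, Finset.smul_sum]
  exact Finset.sum_congr rfl fun y _ => smul_comm _ _ _

/-- Iterated descent operator from level `b` down to level `a` (zero if `a > b`). -/
noncomputable def Dw (w : ∀ n, D.T (n + 1) → 𝔽') : ∀ (a b : ℕ), (D.T b → E') → (D.T a → E')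
  | a, 0, u => fun x => if h : a = 0 then u (tc h x) else 0
  | a, b+1, u => fun x => if h : a = b+1 then u (tc h x) else Dw w a b (phi w b u) x

@[simp] lemma Dw_self (w : ∀ n, D.T (n + 1) → 𝔽') (a : ℕ) (u : D.T a → E') :
    Dw w a a u = u := by
  cases a <;> · funext x; simp [Dw]

lemma Dw_of_lt (w : ∀ n, D.T (n + 1) → 𝔽') {a b : ℕ} (h : a < b + 1) (u : D.T (b+1) → E') :
    Dw w a (b+1) u = Dw w a b (phi w b u) := by
  funext x; simp [Dw, Nat.ne_of_lt h]

lemma Dw_succ_left (w : ∀ n, D.T (n + 1) → 𝔽') : ∀ {b a : ℕ}, a < b → ∀ (u : D.T b → E'),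
    Dw w a b u = phi w a (Dw w (a+1) b u) := by
  intro b
  induction b with
  | zero => intro a h; omega
  | succ b ih =>
    intro a h u
    rcases eq_or_lt_of_le (Nat.succ_le_of_lt h) with he | hlt
    · -- a + 1 = b + 1
      have ha : a = b := by omega
      subst ha
      rw [Dw_of_lt w h, Dw_self, Dw_self]
    · have hab : a < b := by omega
      rw [Dw_of_lt w h, ih hab, Dw_of_lt w (by omega)]

lemma Dw_add (w : ∀ n, D.T (n + 1) → 𝔽') : ∀ (b a : ℕ) (u v : D.T b → E'),
    Dw w a b (u + v) = Dw w a b u + Dw w a b v := by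
  intro b
  induction b with
  | zero =>
    intro a u v
    rcases eq_or_ne a 0 with h | h
    · subst h; simp
    · funext x; simp [Dw, h]
  | succ b ih =>
    intro a u v
    rcases eq_or_ne a (b+1) with h | h
    · subst h; simp
    · have h' : ∀ (u : D.T (b+1) → E'), Dw w a (b+1) u = Dw w a b (phi w b u) := by
        intro u; funext x; simp [Dw, h]
      rw [h', h', h', phi_add, ih]

lemma Dw_smul (w : ∀ n, D.T (n + 1) → 𝔽') : ∀ (b a : ℕ) (c : 𝔽') (u : D.T b → E'),
    Dw w a b (c • u) = c • Dw w a b u := by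
  intro b
  induction b with
  | zero =>
    intro a c u
    rcases eq_or_ne a 0 with h | h
    · subst h; simp
    · funext x; simp [Dw, h]
  | succ b ih =>
    intro a c u
    rcases eq_or_ne a (b+1) with h | h
    · subst h; simp
    · have h' : ∀ (u : D.T (b+1) → E'), Dw w a (b+1) u = Dw w a b (phi w b u) := by
        intro u; funext x; simp [Dw, h]
      rw [h', h', phi_smul, ih]

lemma Dw_comp (w : ∀ n, D.T (n + 1) → 𝔽') : ∀ (c b a : ℕ), a ≤ b → b ≤ c →
    ∀ (u : D.T c → E'), Dw w a b (Dw w b c u) = Dw w a c u := by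
  intro c
  induction c with
  | zero =>
    intro b a hab hbc u
    have hb : b = 0 := by omega
    subst hb; rw [Dw_self]
  | succ c ih =>
    intro b a hab hbc u
    rcases eq_or_ne b (c+1) with h | h
    · subst h; rw [Dw_self]
    · have hbc' : b ≤ c := by omega
      rw [Dw_of_lt w (by omega), Dw_of_lt w (by omega), ih b a hab hbc']

/-- Harmonic functions are compatible with `Dw`. -/
lemma Dw_harmonic {w : ∀ n, D.T (n + 1) → 𝔽'} {f : D.Vert → E'} (hf : D.Harmonic w f) :
    ∀ (b a : ℕ), a ≤ b → Dw w a b (fun x => f ⟨b, x⟩) = fun x => f ⟨a, x⟩ := by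
  intro b
  induction b with
  | zero =>
    intro a hab
    obtain rfl : a = 0 := by omega
    simp
  | succ b ih =>
    intro a hab
    rcases eq_or_ne a (b+1) with h | h
    · subst h; simp
    · rw [Dw_of_lt w (by omega)]
      have : phi w b (fun x => f ⟨b+1, x⟩) = fun x => f ⟨b, x⟩ := by
        funext x; exact (hf b x).symm
      rw [this, ih a (by omega)]

/-- Ancestor map (junk if `a > b`). -/
noncomputable def ancB : ∀ (a b : ℕ), D.T b → D.T a
  | a, 0, y => if h : a = 0 then tc h.symm y else default
  | a, b+1, y => if h : a = b+1 then tc h.symm y else ancB a b (D.par b y)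

@[simp] lemma ancB_self (a : ℕ) (y : D.T a) : ancB a a y = y := by
  cases a <;> simp [ancB]

lemma ancB_of_lt {a b : ℕ} (h : a < b + 1) (y : D.T (b+1)) :
    ancB a (b+1) y = ancB a b (D.par b y) := by
  simp [ancB, Nat.ne_of_lt h]

/-- Along a boundary point, ancestors of the level-`b` vertex are the lower vertices. -/
lemma ancB_boundary (e : D.Boundary) : ∀ (b a : ℕ), a ≤ b → ancB a b (e.1 b) = e.1 a := by
  intro b
  induction b with
  | zero =>
    intro a h
    obtain rfl : a = 0 := by omega
    simp
  | succ b ih =>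
    intro a h
    rcases eq_or_ne a (b+1) with h' | h'
    · subst h'; simp
    · rw [ancB_of_lt (by omega), e.2 b, ih a (by omega)]

/-- Designated descendant chain through small-probability children. -/
noncomputable def descK (q : ∀ n, D.T (n + 1) → ℝ) (hq0 : ∀ n y, 0 < q n y)
    (hq1 : ∀ n (x : D.T n), ∑ y : {y : D.T (n + 1) // D.par n y = x}, q n y.1 = 1) :
    ∀ (a k : ℕ), D.T a → D.T (a+k)
  | _, 0, x => x
  | a, k+1, x => mchild q hq0 hq1 (a+k) (descK q hq0 hq1 a k x)

lemma ancB_descK (q : ∀ n, D.T (n + 1) → ℝ) (hq0 : ∀ n y, 0 < q n y)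
    (hq1 : ∀ n (x : D.T n), ∑ y : {y : D.T (n + 1) // D.par n y = x}, q n y.1 = 1)
    (a : ℕ) : ∀ (k : ℕ) (x : D.T a), ancB a (a+k) (descK q hq0 hq1 a k x) = x := by
  intro k
  induction k with
  | zero => intro x; simp [descK]
  | succ k ih =>
    intro x
    have key : ancB a ((a+k)+1) (mchild q hq0 hq1 (a+k) (descK q hq0 hq1 a k x)) = x := by
      rw [ancB_of_lt (by omega), mchild_par, ih]
    exact key

lemma pathProb_nonneg (q : ∀ n, D.T (n + 1) → ℝ) (hq0 : ∀ n y, 0 < q n y) :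
    ∀ (n : ℕ) (x : D.T n), 0 ≤ D.pathProb q n x := by
  intro n
  induction n with
  | zero => intro x; rw [TreeData.pathProb]; norm_num
  | succ n ih =>
    intro x
    rw [TreeData.pathProb]
    exact mul_nonneg (ih _) (le_of_lt (hq0 n x))

lemma pathProb_descK (q : ∀ n, D.T (n + 1) → ℝ) (hq0 : ∀ n y, 0 < q n y)
    (hq1 : ∀ n (x : D.T n), ∑ y : {y : D.T (n + 1) // D.par n y = x}, q n y.1 = 1)
    (a : ℕ) : ∀ (k : ℕ) (x : D.T a),
    D.pathProb q (a+k) (descK q hq0 hq1 a k x) ≤ D.pathProb q a x * (2⁻¹ : ℝ)^k := by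
  intro k
  induction k with
  | zero => intro x; simp [descK]
  | succ k ih =>
    intro x
    have h1 : D.pathProb q ((a+k)+1) (mchild q hq0 hq1 (a+k) (descK q hq0 hq1 a k x))
        = D.pathProb q (a+k) (descK q hq0 hq1 a k x)
          * q (a+k) (mchild q hq0 hq1 (a+k) (descK q hq0 hq1 a k x)) := by
      have h0 : D.pathProb q ((a+k)+1) (mchild q hq0 hq1 (a+k) (descK q hq0 hq1 a k x))
          = D.pathProb q (a+k) (D.par (a+k) (mchild q hq0 hq1 (a+k) (descK q hq0 hq1 a k x)))
            * q (a+k) (mchild q hq0 hq1 (a+k) (descK q hq0 hq1 a k x)) := rfl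
      rw [h0, mchild_par]
    have h2 := mchild_q q hq0 hq1 (a+k) (descK q hq0 hq1 a k x)
    have h3 := hq0 (a+k) (mchild q hq0 hq1 (a+k) (descK q hq0 hq1 a k x))
    have h4 := pathProb_nonneg q hq0 (a+k) (descK q hq0 hq1 a k x)
    have key : D.pathProb q ((a+k)+1) (mchild q hq0 hq1 (a+k) (descK q hq0 hq1 a k x))
        ≤ D.pathProb q a x * (2⁻¹:ℝ)^(k+1) := by
      rw [h1, pow_succ]
      calc D.pathProb q (a+k) (descK q hq0 hq1 a k x)
          * q (a+k) (mchild q hq0 hq1 (a+k) (descK q hq0 hq1 a k x))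
          ≤ (D.pathProb q a x * (2⁻¹:ℝ)^k) * (1/2 : ℝ) := by
            apply mul_le_mul (ih x) h2 (le_of_lt h3)
            exact mul_nonneg (pathProb_nonneg q hq0 a x) (by positivity)
        _ = D.pathProb q a x * ((2⁻¹:ℝ)^k * 2⁻¹) := by ring
    exact key
end Chunk2


section Chunk3

open scoped Classical

variable {D : TreeData}
variable {𝔽' E' : Type} [Field 𝔽'] [AddCommGroup E'] [Module 𝔽' E']

/-- Product of the weights along the designated descendant chain. -/
noncomputable def Wt (w : ∀ n, D.T (n + 1) → 𝔽') (q : ∀ n, D.T (n + 1) → ℝ)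
    (hq0 : ∀ n y, 0 < q n y)
    (hq1 : ∀ n (x : D.T n), ∑ y : {y : D.T (n + 1) // D.par n y = x}, q n y.1 = 1) :
    ∀ (a k : ℕ), D.T a → 𝔽'
  | _, 0, _ => 1
  | a, k+1, x => Wt w q hq0 hq1 a k x
      * w (a+k) (mchild q hq0 hq1 (a+k) (descK q hq0 hq1 a k x))

lemma Wt_ne_zero {w : ∀ n, D.T (n + 1) → 𝔽'} (hw : ∀ n y, w n y ≠ 0)
    (q : ∀ n, D.T (n + 1) → ℝ) (hq0 : ∀ n y, 0 < q n y)
    (hq1 : ∀ n (x : D.T n), ∑ y : {y : D.T (n + 1) // D.par n y = x}, q n y.1 = 1)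
    (a : ℕ) : ∀ (k : ℕ) (x : D.T a), Wt w q hq0 hq1 a k x ≠ 0 := by
  intro k
  induction k with
  | zero => intro x; exact one_ne_zero
  | succ k ih => intro x; exact mul_ne_zero (ih x) (hw _ _)

lemma phi_delta (w : ∀ n, D.T (n + 1) → 𝔽') (l : ℕ) (v : D.T (l+1)) (c : E') :
    phi w l (fun y => if y = v then c else 0)
      = fun z => if z = D.par l v then w l v • c else 0 := by
  classical
  funext z
  rcases eq_or_ne z (D.par l v) with h | h
  · rw [if_pos h]
    unfold phi
    rw [Finset.sum_eq_single (⟨v, h.symm⟩ : {y : D.T (l+1) // D.par l y = z})]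
    · simp
    · intro b _ hb
      have hb1 : b.1 ≠ v := fun hbv => hb (Subtype.ext hbv)
      simp [hb1]
    · intro habs; exact absurd (Finset.mem_univ _) habs
  · rw [if_neg h]
    unfold phi
    apply Finset.sum_eq_zero
    intro y _
    have hy1 : y.1 ≠ v := by
      intro hyv
      exact h (by rw [← y.2, hyv])
    simp [hy1]

lemma Dw_zero (w : ∀ n, D.T (n + 1) → 𝔽') (a b : ℕ) :
    Dw w a b (0 : D.T b → E') = 0 := by
  have h : ((0:𝔽') • (0 : D.T b → E')) = 0 := zero_smul _ _
  rw [← h, Dw_smul, zero_smul]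

lemma Dw_sum (w : ∀ n, D.T (n + 1) → 𝔽') (a b : ℕ) {ι : Type} (s : Finset ι)
    (u : ι → D.T b → E') :
    Dw w a b (∑ i ∈ s, u i) = ∑ i ∈ s, Dw w a b (u i) := by
  classical
  induction s using Finset.induction with
  | empty => simpa using Dw_zero w a b
  | insert _ _ hx ih =>
    rw [Finset.sum_insert hx, Finset.sum_insert hx, Dw_add, ih]

lemma Dw_delta (w : ∀ n, D.T (n + 1) → 𝔽') (q : ∀ n, D.T (n + 1) → ℝ)
    (hq0 : ∀ n y, 0 < q n y)
    (hq1 : ∀ n (x : D.T n), ∑ y : {y : D.T (n + 1) // D.par n y = x}, q n y.1 = 1)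
    (a : ℕ) : ∀ (k : ℕ) (x : D.T a) (c : E'),
    Dw w a (a+k) (fun y => if y = descK q hq0 hq1 a k x then c else 0)
      = fun x' => if x' = x then Wt w q hq0 hq1 a k x • c else 0 := by
  classical
  intro k
  induction k with
  | zero =>
    intro x c
    have : Dw w a (a+0) (fun y => if y = descK q hq0 hq1 a 0 x then c else 0)
        = fun y => if y = x then c else 0 := Dw_self w a _
    rw [this]
    funext x'
    simp [Wt]
  | succ k ih =>
    intro x c
    have key : Dw w a ((a+k)+1)
        (fun y => if y = mchild q hq0 hq1 (a+k) (descK q hq0 hq1 a k x) then c else 0)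
        = fun x' => if x' = x then Wt w q hq0 hq1 a (k+1) x • c else 0 := by
      rw [Dw_of_lt w (by omega), phi_delta]
      simp only [mchild_par q hq0 hq1]
      rw [ih x _]
      funext x'
      rcases eq_or_ne x' x with h | h
      · simp only [h, if_pos rfl]
        rw [smul_smul]
        rfl
      · simp [h]
    exact key

lemma levelMass (q : ∀ n, D.T (n + 1) → ℝ)
    (hq1 : ∀ n (x : D.T n), ∑ y : {y : D.T (n + 1) // D.par n y = x}, q n y.1 = 1) :
    ∀ n : ℕ, ∑ x : D.T n, D.pathProb q n x = 1 := by
  intro n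
  induction n with
  | zero =>
    obtain ⟨x0⟩ := AuxUniv.levelNonempty D 0
    have hcard : Fintype.card (D.T 0) = 1 :=
      Fintype.card_eq_one_iff.mpr ⟨x0, fun y => D.rootSubsingleton y x0⟩
    have hval : ∀ x : D.T 0, D.pathProb q 0 x = 1 := fun _ => rfl
    rw [Finset.sum_congr rfl (fun x _ => hval x), Finset.sum_const, Finset.card_univ, hcard]
    simp
  | succ n ih =>
    classical
    rw [← Fintype.sum_fiberwise (D.par n) (fun y => D.pathProb q (n+1) y)]
    have : ∀ x : D.T n, ∑ y : {y : D.T (n+1) // D.par n y = x}, D.pathProb q (n+1) y.1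
        = D.pathProb q n x := by
      intro x
      have h1 : ∀ y : {y : D.T (n+1) // D.par n y = x},
          D.pathProb q (n+1) y.1 = D.pathProb q n x * q n y.1 := by
        intro y
        have : D.pathProb q (n+1) y.1 = D.pathProb q n (D.par n y.1) * q n y.1 := rfl
        rw [this, y.2]
      rw [Finset.sum_congr rfl (fun y _ => h1 y), ← Finset.mul_sum, hq1 n x, mul_one]
    rw [Finset.sum_congr rfl (fun x _ => this x), ih]

lemma measurableSet_sector (n : ℕ) (x : D.T n) : MeasurableSet (D.sector n x) :=
  MeasurableSpace.measurableSet_generateFrom ⟨n, x, rfl⟩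

lemma measurable_eval (n : ℕ) : Measurable (fun e : D.Boundary => e.1 n) := by
  intro s _
  have h : (fun e : D.Boundary => e.1 n) ⁻¹' s = ⋃ x ∈ s, D.sector n x := by
    ext e; simp [TreeData.sector]
  rw [h]
  exact MeasurableSet.biUnion (Set.to_countable s) (fun x _ => measurableSet_sector n x)

lemma measurable_levelFun {α : Type} [MeasurableSpace α] {n : ℕ} (t : D.T n → α) :
    Measurable (fun e : D.Boundary => t (e.1 n)) :=
  (measurable_from_top).comp (measurable_eval n)

/-- The main correction lemma: solve the harmonicity constraint, altering a
prescribed level function only on a set of small measure. -/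
lemma solveEx (w : ∀ n, D.T (n + 1) → 𝔽') (hw : ∀ n y, w n y ≠ 0)
    (q : ∀ n, D.T (n + 1) → ℝ) (hq0 : ∀ n y, 0 < q n y)
    (hq1 : ∀ n (x : D.T n), ∑ y : {y : D.T (n + 1) // D.par n y = x}, q n y.1 = 1)
    (P : Measure D.Boundary)
    (hP : ∀ n (x : D.T n), P (D.sector n x) = ENNReal.ofReal (D.pathProb q n x))
    {a b : ℕ} (hab : a < b) (A : D.T a → E') (t : D.T b → E') :
    ∃ u : D.T b → E', Dw w a b u = A ∧
      P {e : D.Boundary | u (e.1 b) ≠ t (e.1 b)} ≤ ENNReal.ofReal ((2⁻¹:ℝ)^(b-a)) := by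
  classical
  obtain ⟨k, rfl⟩ : ∃ k, b = a + (k+1) := ⟨b - a - 1, by omega⟩
  refine ⟨t + ∑ x : D.T a, (fun y => if y = descK q hq0 hq1 a (k+1) x then
      (Wt w q hq0 hq1 a (k+1) x)⁻¹ • (A x - Dw w a (a+(k+1)) t x) else 0), ?_, ?_⟩
  · rw [Dw_add, Dw_sum]
    funext x'
    have hterm : ∀ x : D.T a,
        Dw w a (a+(k+1)) (fun y => if y = descK q hq0 hq1 a (k+1) x then
            (Wt w q hq0 hq1 a (k+1) x)⁻¹ • (A x - Dw w a (a+(k+1)) t x) else 0)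
          = fun z => if z = x then Wt w q hq0 hq1 a (k+1) x •
              ((Wt w q hq0 hq1 a (k+1) x)⁻¹ • (A x - Dw w a (a+(k+1)) t x)) else 0 :=
      fun x => Dw_delta w q hq0 hq1 a (k+1) x _
    rw [Finset.sum_congr rfl (fun x _ => hterm x)]
    have hsum : (∑ x : D.T a, fun z => if z = x then Wt w q hq0 hq1 a (k+1) x •
          ((Wt w q hq0 hq1 a (k+1) x)⁻¹ • (A x - Dw w a (a+(k+1)) t x)) else 0) x'
        = Wt w q hq0 hq1 a (k+1) x' •
          ((Wt w q hq0 hq1 a (k+1) x')⁻¹ • (A x' - Dw w a (a+(k+1)) t x')) := by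
      rw [Finset.sum_apply, Finset.sum_ite_eq (Finset.univ) x']
      simp
    simp only [Pi.add_apply]
    rw [hsum, smul_smul, mul_inv_cancel₀ (Wt_ne_zero hw q hq0 hq1 a (k+1) x'), one_smul]
    abel
  · refine le_trans (measure_mono ?_) (le_trans
      (measure_biUnion_finset_le (Finset.univ : Finset (D.T a))
        (fun x => D.sector (a+(k+1)) (descK q hq0 hq1 a (k+1) x))) ?_)
    · intro e he
      simp only [Set.mem_setOf_eq, Pi.add_apply] at he
      have hne : (∑ x : D.T a, fun y => if y = descK q hq0 hq1 a (k+1) x then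
          (Wt w q hq0 hq1 a (k+1) x)⁻¹ • (A x - Dw w a (a+(k+1)) t x) else 0)
            (e.1 (a+(k+1))) ≠ 0 := by
        intro h0
        exact he (by rw [h0, add_zero])
      rw [Finset.sum_apply] at hne
      obtain ⟨x, _, hx⟩ := Finset.exists_ne_zero_of_sum_ne_zero hne
      have hex : e.1 (a+(k+1)) = descK q hq0 hq1 a (k+1) x := by
        by_contra hne2
        exact hx (if_neg hne2)
      simp only [Set.mem_iUnion]
      exact ⟨x, Finset.mem_univ x, hex⟩
    · calc ∑ x : D.T a, P (D.sector (a+(k+1)) (descK q hq0 hq1 a (k+1) x))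
          = ∑ x : D.T a, ENNReal.ofReal (D.pathProb q (a+(k+1)) (descK q hq0 hq1 a (k+1) x)) :=
            Finset.sum_congr rfl (fun x _ => hP _ _)
        _ ≤ ENNReal.ofReal ((2⁻¹:ℝ)^(a+(k+1)-a)) := by
            rw [← ENNReal.ofReal_sum_of_nonneg (fun x _ => pathProb_nonneg q hq0 _ _)]
            apply ENNReal.ofReal_le_ofReal
            calc ∑ x : D.T a, D.pathProb q (a+(k+1)) (descK q hq0 hq1 a (k+1) x)
                ≤ ∑ x : D.T a, D.pathProb q a x * (2⁻¹:ℝ)^(k+1) :=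
                  Finset.sum_le_sum (fun x _ => pathProb_descK q hq0 hq1 a (k+1) x)
              _ = (∑ x : D.T a, D.pathProb q a x) * (2⁻¹:ℝ)^(k+1) := by
                  rw [Finset.sum_mul]
              _ = (2⁻¹:ℝ)^(a+(k+1)-a) := by
                  rw [levelMass q hq1 a, one_mul]
                  congr 1
                  omega

end Chunk3


section Chunk4

lemma rho_nonneg {r : ℝ} (hr : 0 ≤ r) : 0 ≤ r / (1 + r) :=
  div_nonneg hr (by linarith)

lemma rho_le_one {r : ℝ} (hr : 0 ≤ r) : r / (1 + r) ≤ 1 := by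
  rw [div_le_one (by linarith)]; linarith

lemma rho_le_self {r : ℝ} (hr : 0 ≤ r) : r / (1 + r) ≤ r := by
  rcases eq_or_lt_of_le hr with h | h
  · simp [← h]
  · rw [div_le_iff₀ (by linarith)]
    nlinarith

lemma rho_mono {r s : ℝ} (hr : 0 ≤ r) (hrs : r ≤ s) : r / (1 + r) ≤ s / (1 + s) := by
  rw [div_le_div_iff₀ (by linarith) (by linarith)]
  nlinarith

lemma rho_triangle {E' : Type} [MetricSpace E'] (a b c : E') :
    dist a c / (1 + dist a c) ≤ dist a b / (1 + dist a b) + dist b c / (1 + dist b c) := by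
  have hab : (0:ℝ) ≤ dist a b := dist_nonneg
  have hbc : (0:ℝ) ≤ dist b c := dist_nonneg
  have htri : dist a c ≤ dist a b + dist b c := dist_triangle a b c
  calc dist a c / (1 + dist a c)
      ≤ (dist a b + dist b c) / (1 + (dist a b + dist b c)) := rho_mono dist_nonneg htri
    _ = dist a b / (1 + (dist a b + dist b c)) + dist b c / (1 + (dist a b + dist b c)) := by
        rw [← add_div]
    _ ≤ dist a b / (1 + dist a b) + dist b c / (1 + dist b c) := by
        gcongr <;> linarith

variable {D : TreeData}

local instance secondCountableE : SecondCountableTopology E :=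
  UniformSpace.secondCountable_of_separable E

lemma measurable_rho {f g : D.Boundary → E} (hf : Measurable f) (hg : Measurable g) :
    Measurable (fun e => dist (f e) (g e) / (1 + dist (f e) (g e))) := by
  have h1 : Measurable (fun e => dist (f e) (g e)) := hf.dist hg
  exact h1.div (measurable_const.add h1)

lemma integrable_rho (P : Measure D.Boundary) [IsProbabilityMeasure P]
    {f g : D.Boundary → E} (hf : Measurable f) (hg : Measurable g) :
    Integrable (fun e => dist (f e) (g e) / (1 + dist (f e) (g e))) P := by
  refine Integrable.mono' (integrable_const 1) (measurable_rho hf hg).aestronglyMeasurable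
    (Filter.Eventually.of_forall (fun e => ?_))
  rw [Real.norm_eq_abs, abs_of_nonneg (rho_nonneg dist_nonneg)]
  exact rho_le_one dist_nonneg

lemma dP_nonneg (P : Measure D.Boundary) (f g : D.Boundary → E) : 0 ≤ D.dP P f g :=
  integral_nonneg (fun e => rho_nonneg dist_nonneg)

lemma dP_le_measure (P : Measure D.Boundary) [IsProbabilityMeasure P]
    {f g : D.Boundary → E} {S : Set D.Boundary} (hS : MeasurableSet S)
    (hsub : {e | f e ≠ g e} ⊆ S) : D.dP P f g ≤ (P S).toReal := by
  have hle : ∀ e, dist (f e) (g e) / (1 + dist (f e) (g e))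
      ≤ S.indicator (fun _ => (1:ℝ)) e := by
    intro e
    by_cases he : e ∈ S
    · rw [Set.indicator_of_mem he]
      exact rho_le_one dist_nonneg
    · rw [Set.indicator_of_notMem he]
      have : f e = g e := by
        by_contra hne
        exact he (hsub hne)
      simp [this]
  have := integral_mono_of_nonneg
    (Filter.Eventually.of_forall (fun e => rho_nonneg dist_nonneg))
    ((integrable_const (μ := P) (1:ℝ)).indicator hS)
    (Filter.Eventually.of_forall hle)
  rw [integral_indicator_const (1:ℝ) hS] at this
  simpa [TreeData.dP, TreeData.dPgen, measureReal_def] using this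

lemma dP_le_of_dist_le (P : Measure D.Boundary) [IsProbabilityMeasure P]
    {f g : D.Boundary → E} {δ : ℝ} (hδ : 0 ≤ δ) (h : ∀ e, dist (f e) (g e) ≤ δ) :
    D.dP P f g ≤ δ := by
  have := integral_mono_of_nonneg
    (Filter.Eventually.of_forall (fun e => rho_nonneg (dist_nonneg (x := f e) (y := g e))))
    (integrable_const (μ := P) δ)
    (Filter.Eventually.of_forall (fun e => le_trans (rho_le_self dist_nonneg) (h e)))
  simpa [TreeData.dP, TreeData.dPgen] using this

lemma dP_triangle (P : Measure D.Boundary) [IsProbabilityMeasure P]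
    {f g h : D.Boundary → E} (hf : Measurable f) (hg : Measurable g) (hh : Measurable h) :
    D.dP P f h ≤ D.dP P f g + D.dP P g h := by
  have hint : Integrable (fun e => dist (f e) (g e) / (1 + dist (f e) (g e))
      + dist (g e) (h e) / (1 + dist (g e) (h e))) P :=
    (integrable_rho P hf hg).add (integrable_rho P hg hh)
  have hmono := integral_mono_of_nonneg
    (Filter.Eventually.of_forall (fun e => rho_nonneg dist_nonneg))
    hint
    (Filter.Eventually.of_forall (fun e => rho_triangle (f e) (g e) (h e)))
  rw [integral_add (integrable_rho P hf hg) (integrable_rho P hg hh)] at hmono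
  exact hmono

end Chunk4


section Chunk5

open scoped symmDiff

variable {D : TreeData}

local instance secondCountableE' : SecondCountableTopology E :=
  UniformSpace.secondCountable_of_separable E

/-- The set of boundary points whose level-`M` vertex lies in `S`. -/
def levelSet (M : ℕ) (S : Set (D.T M)) : Set D.Boundary := {e | e.1 M ∈ S}

lemma measurableSet_levelSet (M : ℕ) (S : Set (D.T M)) :
    MeasurableSet (levelSet M S) :=
  measurable_eval M (by trivial)

lemma refine_levelSet {m M : ℕ} (h : m ≤ M) (S : Set (D.T m)) :
    levelSet m S = levelSet M {y | ancB m M y ∈ S} := by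
  ext e
  simp only [levelSet, Set.mem_setOf_eq]
  rw [ancB_boundary e M m h]

lemma levelSet_union (M : ℕ) (S S' : Set (D.T M)) :
    levelSet M (S ∪ S') = levelSet (D := D) M S ∪ levelSet M S' := rfl

lemma symmDiff_union_subset {X : Type} (A B C' D' : Set X) :
    (A ∪ B) ∆ (C' ∪ D') ⊆ (A ∆ C') ∪ (B ∆ D') := by
  intro e he
  simp only [Set.mem_symmDiff, Set.mem_union] at he ⊢
  tauto

/-- `B` can be approximated in `P`-measure by level sets. -/
def ApproxP (P : Measure D.Boundary) (B : Set D.Boundary) : Prop :=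
  ∀ ε : ℝ, 0 < ε → ∃ (M : ℕ) (S : Set (D.T M)),
    P (B ∆ (levelSet M S)) < ENNReal.ofReal ε

lemma approxP_empty (P : Measure D.Boundary) : ApproxP P (∅ : Set D.Boundary) := by
  intro ε hε
  refine ⟨0, ∅, ?_⟩
  have h : levelSet (D := D) 0 ∅ = ∅ := rfl
  rw [h, symmDiff_self]
  simpa using ENNReal.ofReal_pos.mpr hε

lemma approxP_compl (P : Measure D.Boundary) {B : Set D.Boundary} (hB : ApproxP P B) :
    ApproxP P Bᶜ := by
  intro ε hε
  obtain ⟨M, S, hS⟩ := hB ε hε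
  refine ⟨M, Sᶜ, ?_⟩
  have h : levelSet (D := D) M Sᶜ = (levelSet M S)ᶜ := rfl
  rw [h, compl_symmDiff_compl]
  exact hS

lemma approxP_union (P : Measure D.Boundary) {B B' : Set D.Boundary}
    (hB : ApproxP P B) (hB' : ApproxP P B') : ApproxP P (B ∪ B') := by
  intro ε hε
  obtain ⟨M1, S1, h1⟩ := hB (ε/2) (by linarith)
  obtain ⟨M2, S2, h2⟩ := hB' (ε/2) (by linarith)
  refine ⟨max M1 M2, {y | ancB M1 (max M1 M2) y ∈ S1} ∪ {y | ancB M2 (max M1 M2) y ∈ S2}, ?_⟩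
  rw [levelSet_union]
  rw [← refine_levelSet (le_max_left M1 M2) S1, ← refine_levelSet (le_max_right M1 M2) S2]
  calc P ((B ∪ B') ∆ (levelSet M1 S1 ∪ levelSet M2 S2))
      ≤ P ((B ∆ levelSet M1 S1) ∪ (B' ∆ levelSet M2 S2)) :=
        measure_mono (symmDiff_union_subset _ _ _ _)
    _ ≤ P (B ∆ levelSet M1 S1) + P (B' ∆ levelSet M2 S2) := measure_union_le _ _
    _ < ENNReal.ofReal (ε/2) + ENNReal.ofReal (ε/2) := ENNReal.add_lt_add h1 h2
    _ = ENNReal.ofReal ε := by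
        rw [← ENNReal.ofReal_add (by linarith) (by linarith), add_halves]

lemma approxP_iUnion (P : Measure D.Boundary) [IsProbabilityMeasure P]
    (s : ℕ → Set D.Boundary) (hs : ∀ n, MeasurableSet (s n))
    (hp : ∀ n, ApproxP P (s n)) : ApproxP P (⋃ i, s i) := by
  intro ε hε
  have hfin : ∀ N : ℕ, ApproxP P (⋃ i ∈ Finset.range N, s i) := by
    intro N
    induction N with
    | zero => simpa using approxP_empty P
    | succ N ih =>
      have h : (⋃ i ∈ Finset.range (N+1), s i)
          = (⋃ i ∈ Finset.range N, s i) ∪ s N := by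
        rw [Finset.range_add_one, Finset.set_biUnion_insert]
        exact Set.union_comm _ _
      rw [h]
      exact approxP_union P ih (hp N)
  have hAccSub : ∀ N, (⋃ i ∈ Finset.range N, s i) ⊆ ⋃ i, s i :=
    fun N => Set.iUnion₂_subset fun i _ => Set.subset_iUnion s i
  set DD : ℕ → Set D.Boundary := fun N => (⋃ i, s i) \ (⋃ i ∈ Finset.range N, s i) with hDD
  have hanti : Antitone DD := by
    intro N N' hNN'
    refine Set.diff_subset_diff_right (Set.iUnion₂_subset fun i hi => Set.subset_biUnion_of_mem ?_)
    exact Finset.mem_range.mpr (lt_of_lt_of_le (Finset.mem_range.mp hi) hNN')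
  have hmeasAcc : ∀ N, MeasurableSet (⋃ i ∈ Finset.range N, s i) :=
    fun N => (Finset.range N).measurableSet_biUnion (fun i _ => hs i)
  have hmeas : ∀ N, NullMeasurableSet (DD N) P :=
    fun N => (((MeasurableSet.iUnion hs).diff (hmeasAcc N))).nullMeasurableSet
  have hiInter : ⋂ N, DD N = ∅ := by
    ext e
    simp only [Set.mem_iInter, Set.mem_empty_iff_false, iff_false]
    intro hall
    obtain ⟨i, hi⟩ := Set.mem_iUnion.mp (hall 0).1
    refine (hall (i+1)).2 ?_
    exact Set.mem_biUnion (Finset.self_mem_range_succ i) hi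
  have htend := MeasureTheory.tendsto_measure_iInter_atTop (μ := P) hmeas hanti
    ⟨0, measure_ne_top P _⟩
  rw [hiInter, measure_empty] at htend
  have hev : ∀ᶠ N in Filter.atTop, P (DD N) < ENNReal.ofReal (ε/2) := by
    refine htend.eventually_lt_const ?_
    exact ENNReal.ofReal_pos.mpr (by linarith)
  obtain ⟨N, hN⟩ := hev.exists
  obtain ⟨M, S, hMS⟩ := hfin N (ε/2) (by linarith)
  refine ⟨M, S, ?_⟩
  have hsub : (⋃ i, s i) ∆ (levelSet M S)
      ⊆ DD N ∪ ((⋃ i ∈ Finset.range N, s i) ∆ (levelSet M S)) := by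
    intro e he
    rw [Set.mem_symmDiff] at he
    rcases he with ⟨h1, h2⟩ | ⟨h1, h2⟩
    · by_cases hacc : e ∈ ⋃ i ∈ Finset.range N, s i
      · right; rw [Set.mem_symmDiff]; left; exact ⟨hacc, h2⟩
      · left; exact ⟨h1, hacc⟩
    · right; rw [Set.mem_symmDiff]; right
      exact ⟨h1, fun hc => h2 (hAccSub N hc)⟩
  calc P ((⋃ i, s i) ∆ (levelSet M S))
      ≤ P (DD N ∪ ((⋃ i ∈ Finset.range N, s i) ∆ (levelSet M S))) := measure_mono hsub
    _ ≤ P (DD N) + P ((⋃ i ∈ Finset.range N, s i) ∆ (levelSet M S)) := measure_union_le _ _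
    _ < ENNReal.ofReal (ε/2) + ENNReal.ofReal (ε/2) := ENNReal.add_lt_add hN hMS
    _ = ENNReal.ofReal ε := by
        rw [← ENNReal.ofReal_add (by linarith) (by linarith), add_halves]

/-- Every measurable subset of the boundary is approximated by level sets. -/
lemma approxP_of_measurable (P : Measure D.Boundary) [IsProbabilityMeasure P]
    (B : Set D.Boundary) (hB : MeasurableSet B) : ApproxP P B := by
  have key := MeasurableSpace.generateFrom_induction
    (α := D.Boundary) {s | ∃ n, ∃ x : D.T n, s = D.sector n x}
    (fun s _ => ApproxP P s)
    ?_ (approxP_empty P) (fun t _ ht => approxP_compl P ht)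
    (fun s hsm hsp => approxP_iUnion P s hsm hsp)
    B hB
  · exact key
  · rintro t ⟨n, x, rfl⟩ _
    intro ε hε
    refine ⟨n, {x}, ?_⟩
    have h : D.sector n x = levelSet n {x} := rfl
    rw [h, symmDiff_self]
    simpa using ENNReal.ofReal_pos.mpr hε

end Chunk5


section Chunk6

open scoped symmDiff ENNReal

variable {D : TreeData}

local instance secondCountableE'' : SecondCountableTopology E :=
  UniformSpace.secondCountable_of_separable E

set_option maxHeartbeats 1000000 in
lemma simpleLevel (P : Measure D.Boundary) [IsProbabilityMeasure P]
    (φ : SimpleFunc D.Boundary E) {δ : ℝ} (hδ : 0 < δ) :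
    ∃ (M : ℕ) (t : D.T M → E), D.dP P (fun e => t (e.1 M)) ⇑φ < δ := by
  classical
  set V := φ.range with hV
  have happrox : ∀ v : E, ∃ (m : ℕ) (S : Set (D.T m)),
      P ((⇑φ ⁻¹' {v}) ∆ (levelSet m S)) < ENNReal.ofReal (δ/(V.card + 1)) := by
    intro v
    exact approxP_of_measurable P (⇑φ ⁻¹' {v}) (φ.measurableSet_fiber v) _ (by positivity)
  choose Mf Sf hMS using happrox
  set M := V.sup Mf with hM
  set S' : E → Set (D.T M) := fun v => {y | ancB (Mf v) M y ∈ Sf v} with hS'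
  have hU : ∀ v ∈ V, levelSet (Mf v) (Sf v) = levelSet M (S' v) :=
    fun v hv => refine_levelSet (Finset.le_sup hv) (Sf v)
  set t : D.T M → E := fun y => if hy : ∃ v, v ∈ V ∧ y ∈ S' v then hy.choose else 0 with ht
  have hbad : {e : D.Boundary | t (e.1 M) ≠ φ e}
      ⊆ ⋃ v ∈ V, ((⇑φ ⁻¹' {v}) ∆ (levelSet M (S' v))) := by
    intro e he
    simp only [Set.mem_setOf_eq] at he
    by_contra hnot
    simp only [Set.mem_iUnion, exists_prop, not_exists, not_and] at hnot
    have hvstar : φ e ∈ V := φ.mem_range_self e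
    have h1 : e ∈ ⇑φ ⁻¹' {φ e} := by simp
    have h2 : e ∈ levelSet M (S' (φ e)) := by
      by_contra h2
      exact hnot (φ e) hvstar (Set.mem_symmDiff.mpr (Or.inl ⟨h1, h2⟩))
    have hy : ∃ v, v ∈ V ∧ (e.1 M) ∈ S' v := ⟨φ e, hvstar, h2⟩
    have htv : t (e.1 M) = hy.choose := dif_pos hy
    have hne : hy.choose ≠ φ e := by rw [← htv]; exact he
    refine hnot hy.choose hy.choose_spec.1 (Set.mem_symmDiff.mpr (Or.inr ⟨hy.choose_spec.2, ?_⟩))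
    intro hc
    simp only [Set.mem_preimage, Set.mem_singleton_iff] at hc
    exact hne hc.symm
  have hUbadMeas : MeasurableSet (⋃ v ∈ V, ((⇑φ ⁻¹' {v}) ∆ (levelSet M (S' v)))) := by
    refine V.measurableSet_biUnion (fun v _ => ?_)
    rw [Set.symmDiff_def]
    exact ((φ.measurableSet_fiber v).diff (measurableSet_levelSet M (S' v))).union
      ((measurableSet_levelSet M (S' v)).diff (φ.measurableSet_fiber v))
  have hPbound : P (⋃ v ∈ V, ((⇑φ ⁻¹' {v}) ∆ (levelSet M (S' v))))
      ≤ (V.card : ℝ≥0∞) * ENNReal.ofReal (δ/(V.card + 1)) := by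
    refine le_trans (measure_biUnion_finset_le V _) ?_
    have hterm : ∀ v ∈ V, P ((⇑φ ⁻¹' {v}) ∆ (levelSet M (S' v)))
        ≤ ENNReal.ofReal (δ/(V.card + 1)) := by
      intro v hv
      rw [← hU v hv]
      exact le_of_lt (hMS v)
    refine le_trans (Finset.sum_le_sum hterm) ?_
    rw [Finset.sum_const, nsmul_eq_mul]
  have hreal : ((V.card : ℝ≥0∞) * ENNReal.ofReal (δ/(V.card + 1))).toReal
      = (V.card : ℝ) * (δ/((V.card:ℝ) + 1)) := by
    rw [ENNReal.toReal_mul, ENNReal.toReal_natCast,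
      ENNReal.toReal_ofReal (le_of_lt (div_pos hδ (by positivity)))]
  have hlt : (V.card : ℝ) * (δ/((V.card:ℝ) + 1)) < δ := by
    have hc1 : (0:ℝ) < (V.card : ℝ) + 1 := by positivity
    have hfrac : (V.card : ℝ) / ((V.card:ℝ) + 1) < 1 := (div_lt_one hc1).mpr (by linarith)
    have heq : (V.card : ℝ) * (δ/((V.card:ℝ) + 1)) = ((V.card : ℝ) / ((V.card:ℝ) + 1)) * δ := by
      ring
    rw [heq]
    calc ((V.card : ℝ) / ((V.card:ℝ) + 1)) * δ < 1 * δ := by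
          exact mul_lt_mul_of_pos_right hfrac hδ
      _ = δ := one_mul δ
  refine ⟨M, t, ?_⟩
  have hdp : D.dP P (fun e => t (e.1 M)) ⇑φ
      ≤ (P (⋃ v ∈ V, ((⇑φ ⁻¹' {v}) ∆ (levelSet M (S' v))))).toReal :=
    dP_le_measure P hUbadMeas hbad
  have htr : (P (⋃ v ∈ V, ((⇑φ ⁻¹' {v}) ∆ (levelSet M (S' v))))).toReal
      ≤ (V.card : ℝ) * (δ/((V.card:ℝ) + 1)) := by
    rw [← hreal]
    exact ENNReal.toReal_mono
      (ENNReal.mul_ne_top (ENNReal.natCast_ne_top _) ENNReal.ofReal_ne_top) hPbound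
  linarith

lemma levelDense (P : Measure D.Boundary) [IsProbabilityMeasure P]
    (h : D.Boundary → E) (hh : Measurable h) {ε : ℝ} (hε : 0 < ε) :
    ∃ (M : ℕ) (t : D.T M → E), D.dP P (fun e => t (e.1 M)) h < ε := by
  have hsm : StronglyMeasurable h := hh.stronglyMeasurable
  set F : ℕ → D.Boundary → ℝ := fun k e =>
    dist ((hsm.approx k) e) (h e) / (1 + dist ((hsm.approx k) e) (h e)) with hF
  have hFmeas : ∀ k, AEStronglyMeasurable (F k) P := fun k =>
    (measurable_rho ((hsm.approx k).measurable) hh).aestronglyMeasurable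
  have hbound : ∀ k, ∀ᵐ e ∂P, ‖F k e‖ ≤ (1:ℝ) := fun k =>
    Filter.Eventually.of_forall (fun e => by
      rw [Real.norm_eq_abs, abs_of_nonneg (rho_nonneg dist_nonneg)]
      exact rho_le_one dist_nonneg)
  have hlim : ∀ᵐ e ∂P, Filter.Tendsto (fun k => F k e) Filter.atTop
      (𝓝 ((fun _ : D.Boundary => (0:ℝ)) e)) := by
    refine Filter.Eventually.of_forall (fun e => ?_)
    have hd : Filter.Tendsto (fun k => dist ((hsm.approx k) e) (h e)) Filter.atTop (𝓝 0) :=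
      tendsto_iff_dist_tendsto_zero.mp (hsm.tendsto_approx e)
    have hden : Filter.Tendsto (fun k => 1 + dist ((hsm.approx k) e) (h e))
        Filter.atTop (𝓝 (1 + 0)) :=
      (tendsto_const_nhds : Filter.Tendsto (fun _ : ℕ => (1:ℝ)) Filter.atTop (𝓝 1)).add hd
    have := Filter.Tendsto.div hd hden (by norm_num)
    simpa [Pi.div_def] using this
  have hdc := tendsto_integral_of_dominated_convergence (μ := P) (fun _ => (1:ℝ))
    hFmeas (integrable_const 1) hbound hlim
  rw [integral_zero] at hdc
  have hev : ∀ᶠ k in Filter.atTop, ∫ e, F k e ∂P < ε/2 :=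
    hdc.eventually_lt_const (by linarith)
  obtain ⟨k, hk⟩ := hev.exists
  obtain ⟨M, t, hMt⟩ := simpleLevel P (hsm.approx k) (δ := ε/2) (by linarith)
  refine ⟨M, t, ?_⟩
  have h1 : D.dP P (⇑(hsm.approx k)) h = ∫ e, F k e ∂P := rfl
  have htri := dP_triangle P (f := fun e => t (e.1 M)) (g := ⇑(hsm.approx k)) (h := h)
    (measurable_levelFun t) ((hsm.approx k).measurable) hh
  rw [h1] at htri
  calc D.dP P (fun e => t (e.1 M)) h
      ≤ D.dP P (fun e => t (e.1 M)) (⇑(hsm.approx k)) + ∫ e, F k e ∂P := htri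
    _ < ε/2 + ε/2 := by exact add_lt_add hMt hk
    _ = ε := add_halves ε

end Chunk6


section Chunk7

open scoped Classical

variable {D : TreeData}

/-- Stage levels, chosen inside `τ` above prescribed bounds. -/
noncomputable def lev {τ : Set ℕ} (hτ : τ.Infinite) (bnd : ℕ → ℕ → ℕ) : ℕ → ℕ
  | 0 => 0
  | i+1 => (hτ.exists_gt (bnd i (lev hτ bnd i))).choose

lemma lev_mem {τ : Set ℕ} (hτ : τ.Infinite) (bnd : ℕ → ℕ → ℕ) (i : ℕ) :
    lev hτ bnd (i+1) ∈ τ := by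
  simp only [lev]
  exact (hτ.exists_gt _).choose_spec.1

lemma lev_gt {τ : Set ℕ} (hτ : τ.Infinite) (bnd : ℕ → ℕ → ℕ) (i : ℕ) :
    bnd i (lev hτ bnd i) < lev hτ bnd (i+1) := by
  conv_rhs => rw [lev]
  exact (hτ.exists_gt _).choose_spec.2

/-- The target level function prescribed to player `j` at stage `s`. -/
noncomputable def presc (sF : Set 𝔽) (sE : Set E)
    (tk : ℕ → ℕ × sF × (Σ m, (D.T m → sE)) × ℕ) (lv : ℕ → ℕ) (j s : ℕ) :
    D.T (lv s) → E :=
  if j = (tk s).1 ∧ ((tk s).2.1 : 𝔽) ≠ 0 then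
    fun y => (((tk s).2.1 : 𝔽))⁻¹ • (((tk s).2.2.1.2 (ancB ((tk s).2.2.1.1) (lv s) y)) : E)
  else 0

/-- The recursively constructed stage values of the `j`-th generator. -/
noncomputable def VJ (w : ∀ n, D.T (n + 1) → 𝔽) (hw : ∀ n y, w n y ≠ 0)
    (q : ∀ n, D.T (n + 1) → ℝ) (hq0 : ∀ n y, 0 < q n y)
    (hq1 : ∀ n (x : D.T n), ∑ y : {y : D.T (n + 1) // D.par n y = x}, q n y.1 = 1)
    (P : Measure D.Boundary)
    (hP : ∀ n (x : D.T n), P (D.sector n x) = ENNReal.ofReal (D.pathProb q n x))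
    (sF : Set 𝔽) (sE : Set E) (tk : ℕ → ℕ × sF × (Σ m, (D.T m → sE)) × ℕ)
    (lv : ℕ → ℕ) (hsm : ∀ i, lv i < lv (i+1)) (j : ℕ) (f0 : D.T (lv j) → E) :
    ∀ i : ℕ, D.T (lv (j+i)) → E
  | 0 => f0
  | i+1 => (solveEx w hw q hq0 hq1 P hP (hsm (j+i))
      (VJ w hw q hq0 hq1 P hP sF sE tk lv hsm j f0 i)
      (presc sF sE tk lv j (j+i+1))).choose

lemma VJ_down (w : ∀ n, D.T (n + 1) → 𝔽) (hw : ∀ n y, w n y ≠ 0)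
    (q : ∀ n, D.T (n + 1) → ℝ) (hq0 : ∀ n y, 0 < q n y)
    (hq1 : ∀ n (x : D.T n), ∑ y : {y : D.T (n + 1) // D.par n y = x}, q n y.1 = 1)
    (P : Measure D.Boundary)
    (hP : ∀ n (x : D.T n), P (D.sector n x) = ENNReal.ofReal (D.pathProb q n x))
    (sF : Set 𝔽) (sE : Set E) (tk : ℕ → ℕ × sF × (Σ m, (D.T m → sE)) × ℕ)
    (lv : ℕ → ℕ) (hsm : ∀ i, lv i < lv (i+1)) (j : ℕ) (f0 : D.T (lv j) → E) (i : ℕ) :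
    Dw w (lv (j+i)) (lv (j+i+1)) (VJ w hw q hq0 hq1 P hP sF sE tk lv hsm j f0 (i+1))
      = VJ w hw q hq0 hq1 P hP sF sE tk lv hsm j f0 i := by
  simp only [VJ]
  exact (solveEx w hw q hq0 hq1 P hP (hsm (j+i)) _ _).choose_spec.1

lemma VJ_bad (w : ∀ n, D.T (n + 1) → 𝔽) (hw : ∀ n y, w n y ≠ 0)
    (q : ∀ n, D.T (n + 1) → ℝ) (hq0 : ∀ n y, 0 < q n y)
    (hq1 : ∀ n (x : D.T n), ∑ y : {y : D.T (n + 1) // D.par n y = x}, q n y.1 = 1)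
    (P : Measure D.Boundary)
    (hP : ∀ n (x : D.T n), P (D.sector n x) = ENNReal.ofReal (D.pathProb q n x))
    (sF : Set 𝔽) (sE : Set E) (tk : ℕ → ℕ × sF × (Σ m, (D.T m → sE)) × ℕ)
    (lv : ℕ → ℕ) (hsm : ∀ i, lv i < lv (i+1)) (j : ℕ) (f0 : D.T (lv j) → E) (i : ℕ) :
    P {e : D.Boundary |
        VJ w hw q hq0 hq1 P hP sF sE tk lv hsm j f0 (i+1) (e.1 (lv (j+i+1)))
          ≠ presc sF sE tk lv j (j+i+1) (e.1 (lv (j+i+1)))}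
      ≤ ENNReal.ofReal ((2⁻¹:ℝ)^(lv (j+i+1) - lv (j+i))) := by
  simp only [VJ]
  exact (solveEx w hw q hq0 hq1 P hP (hsm (j+i)) _ _).choose_spec.2

/-- The `j`-th generator. -/
noncomputable def gg (w : ∀ n, D.T (n + 1) → 𝔽) (hw : ∀ n y, w n y ≠ 0)
    (q : ∀ n, D.T (n + 1) → ℝ) (hq0 : ∀ n y, 0 < q n y)
    (hq1 : ∀ n (x : D.T n), ∑ y : {y : D.T (n + 1) // D.par n y = x}, q n y.1 = 1)
    (P : Measure D.Boundary)
    (hP : ∀ n (x : D.T n), P (D.sector n x) = ENNReal.ofReal (D.pathProb q n x))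
    (sF : Set 𝔽) (sE : Set E) (tk : ℕ → ℕ × sF × (Σ m, (D.T m → sE)) × ℕ)
    (lv : ℕ → ℕ) (hsm : ∀ i, lv i < lv (i+1)) (j : ℕ) (f0 : D.T (lv j) → E) :
    D.Vert → E :=
  fun v => Dw w v.1 (lv (j + v.1)) (VJ w hw q hq0 hq1 P hP sF sE tk lv hsm j f0 v.1) v.2

end Chunk7


section Chunk7b

variable {D : TreeData}

lemma lv_mono {lv : ℕ → ℕ} (hsm : ∀ i, lv i < lv (i+1)) : Monotone lv :=
  monotone_nat_of_le_succ (fun n => (hsm n).le)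

lemma lv_up {lv : ℕ → ℕ} (hsm : ∀ i, lv i < lv (i+1)) : ∀ i, i ≤ lv i := by
  intro i
  induction i with
  | zero => exact Nat.zero_le _
  | succ i ih => have := hsm i; omega

lemma VJ_coh (w : ∀ n, D.T (n + 1) → 𝔽) (hw : ∀ n y, w n y ≠ 0)
    (q : ∀ n, D.T (n + 1) → ℝ) (hq0 : ∀ n y, 0 < q n y)
    (hq1 : ∀ n (x : D.T n), ∑ y : {y : D.T (n + 1) // D.par n y = x}, q n y.1 = 1)
    (P : Measure D.Boundary)
    (hP : ∀ n (x : D.T n), P (D.sector n x) = ENNReal.ofReal (D.pathProb q n x))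
    (sF : Set 𝔽) (sE : Set E) (tk : ℕ → ℕ × sF × (Σ m, (D.T m → sE)) × ℕ)
    (lv : ℕ → ℕ) (hsm : ∀ i, lv i < lv (i+1)) (j : ℕ) (f0 : D.T (lv j) → E) :
    ∀ (i i' : ℕ), i ≤ i' → ∀ l, l ≤ lv (j+i) →
      Dw w l (lv (j+i)) (VJ w hw q hq0 hq1 P hP sF sE tk lv hsm j f0 i) = Dw w l (lv (j+i')) (VJ w hw q hq0 hq1 P hP sF sE tk lv hsm j f0 i') := by
  intro i i' h
  induction i', h using Nat.le_induction with
  | base => intro l hl; rfl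
  | succ i' hii' ih =>
    intro l hl
    have h1 : l ≤ lv (j+i') := le_trans hl (lv_mono hsm (Nat.add_le_add_left hii' j))
    have h2 : lv (j+i') ≤ lv ((j+i')+1) := (hsm (j+i')).le
    have hdown := VJ_down w hw q hq0 hq1 P hP sF sE tk lv hsm j f0 i'
    show Dw w l (lv (j+i)) (VJ w hw q hq0 hq1 P hP sF sE tk lv hsm j f0 i) = Dw w l (lv (j+i'+1)) (VJ w hw q hq0 hq1 P hP sF sE tk lv hsm j f0 (i'+1))
    rw [ih l hl, ← hdown, Dw_comp w (lv (j+i'+1)) (lv (j+i')) l h1 h2]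

lemma gg_harmonic (w : ∀ n, D.T (n + 1) → 𝔽) (hw : ∀ n y, w n y ≠ 0)
    (q : ∀ n, D.T (n + 1) → ℝ) (hq0 : ∀ n y, 0 < q n y)
    (hq1 : ∀ n (x : D.T n), ∑ y : {y : D.T (n + 1) // D.par n y = x}, q n y.1 = 1)
    (P : Measure D.Boundary)
    (hP : ∀ n (x : D.T n), P (D.sector n x) = ENNReal.ofReal (D.pathProb q n x))
    (sF : Set 𝔽) (sE : Set E) (tk : ℕ → ℕ × sF × (Σ m, (D.T m → sE)) × ℕ)
    (lv : ℕ → ℕ) (hsm : ∀ i, lv i < lv (i+1)) (j : ℕ) (f0 : D.T (lv j) → E) :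
    D.Harmonic w (gg w hw q hq0 hq1 P hP sF sE tk lv hsm j f0) := by
  intro n x
  have h3 := VJ_coh w hw q hq0 hq1 P hP sF sE tk lv hsm j f0 n (n+1) (by omega) n
    (le_trans (by omega : n ≤ j+n) (lv_up hsm (j+n)))
  have h1 : n < lv (j+(n+1)) := lt_of_lt_of_le (by omega : n < j+(n+1)) (lv_up hsm (j+(n+1)))
  have h2 := Dw_succ_left w h1 (VJ w hw q hq0 hq1 P hP sF sE tk lv hsm j f0 (n+1))
  show Dw w n (lv (j + n)) (VJ w hw q hq0 hq1 P hP sF sE tk lv hsm j f0 n) x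
      = ∑ y : {y : D.T (n+1) // D.par n y = x}, w n y.1 •
          Dw w (n+1) (lv (j+(n+1))) (VJ w hw q hq0 hq1 P hP sF sE tk lv hsm j f0 (n+1)) y.1
  rw [congrFun h3 x, congrFun h2 x]
  rfl

lemma gg_init (w : ∀ n, D.T (n + 1) → 𝔽) (hw : ∀ n y, w n y ≠ 0)
    (q : ∀ n, D.T (n + 1) → ℝ) (hq0 : ∀ n y, 0 < q n y)
    (hq1 : ∀ n (x : D.T n), ∑ y : {y : D.T (n + 1) // D.par n y = x}, q n y.1 = 1)
    (P : Measure D.Boundary)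
    (hP : ∀ n (x : D.T n), P (D.sector n x) = ENNReal.ofReal (D.pathProb q n x))
    (sF : Set 𝔽) (sE : Set E) (tk : ℕ → ℕ × sF × (Σ m, (D.T m → sE)) × ℕ)
    (lv : ℕ → ℕ) (hsm : ∀ i, lv i < lv (i+1)) (j : ℕ) (f0 : D.T (lv j) → E)
    (f : D.Vert → E) (hf : D.Harmonic w f) (hf0 : f0 = fun x => f ⟨lv j, x⟩) :
    ∀ l, l ≤ lv j → ∀ x, gg w hw q hq0 hq1 P hP sF sE tk lv hsm j f0 ⟨l, x⟩ = f ⟨l, x⟩ := by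
  intro l hl x
  show Dw w l (lv (j+l)) (VJ w hw q hq0 hq1 P hP sF sE tk lv hsm j f0 l) x = f ⟨l, x⟩
  have hcoh := VJ_coh w hw q hq0 hq1 P hP sF sE tk lv hsm j f0 0 l (Nat.zero_le l) l
    (show l ≤ lv (j+0) from hl)
  rw [← congrFun (hcoh) x]
  have hV0 : VJ w hw q hq0 hq1 P hP sF sE tk lv hsm j f0 0 = f0 := rfl
  rw [hV0, hf0]
  have := Dw_harmonic hf (lv j) l hl
  exact congrFun (show Dw w l (lv (j+0)) (fun x => f ⟨lv j, x⟩) = fun x => f ⟨l, x⟩ from this) x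

lemma gg_stage (w : ∀ n, D.T (n + 1) → 𝔽) (hw : ∀ n y, w n y ≠ 0)
    (q : ∀ n, D.T (n + 1) → ℝ) (hq0 : ∀ n y, 0 < q n y)
    (hq1 : ∀ n (x : D.T n), ∑ y : {y : D.T (n + 1) // D.par n y = x}, q n y.1 = 1)
    (P : Measure D.Boundary)
    (hP : ∀ n (x : D.T n), P (D.sector n x) = ENNReal.ofReal (D.pathProb q n x))
    (sF : Set 𝔽) (sE : Set E) (tk : ℕ → ℕ × sF × (Σ m, (D.T m → sE)) × ℕ)
    (lv : ℕ → ℕ) (hsm : ∀ i, lv i < lv (i+1)) (j : ℕ) (f0 : D.T (lv j) → E) (i : ℕ) :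
    ∀ y, gg w hw q hq0 hq1 P hP sF sE tk lv hsm j f0 ⟨lv (j+i), y⟩ = VJ w hw q hq0 hq1 P hP sF sE tk lv hsm j f0 i y := by
  intro y
  show Dw w (lv (j+i)) (lv (j + lv (j+i))) (VJ w hw q hq0 hq1 P hP sF sE tk lv hsm j f0 (lv (j+i))) y = VJ w hw q hq0 hq1 P hP sF sE tk lv hsm j f0 i y
  have hii' : i ≤ lv (j+i) := le_trans (Nat.le_add_left i j) (lv_up hsm (j+i))
  have hcoh := VJ_coh w hw q hq0 hq1 P hP sF sE tk lv hsm j f0 i (lv (j+i)) hii' (lv (j+i)) (le_refl _)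
  rw [← congrFun hcoh y, Dw_self]

lemma gg_bad (w : ∀ n, D.T (n + 1) → 𝔽) (hw : ∀ n y, w n y ≠ 0)
    (q : ∀ n, D.T (n + 1) → ℝ) (hq0 : ∀ n y, 0 < q n y)
    (hq1 : ∀ n (x : D.T n), ∑ y : {y : D.T (n + 1) // D.par n y = x}, q n y.1 = 1)
    (P : Measure D.Boundary)
    (hP : ∀ n (x : D.T n), P (D.sector n x) = ENNReal.ofReal (D.pathProb q n x))
    (sF : Set 𝔽) (sE : Set E) (tk : ℕ → ℕ × sF × (Σ m, (D.T m → sE)) × ℕ)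
    (lv : ℕ → ℕ) (hsm : ∀ i, lv i < lv (i+1)) (j : ℕ) (f0 : D.T (lv j) → E) (i : ℕ) :
    P {e : D.Boundary |
        gg w hw q hq0 hq1 P hP sF sE tk lv hsm j f0 ⟨lv (j+i+1), e.1 (lv (j+i+1))⟩
          ≠ presc sF sE tk lv j (j+i+1) (e.1 (lv (j+i+1)))}
      ≤ ENNReal.ofReal ((2⁻¹:ℝ)^(lv (j+i+1) - lv (j+i))) := by
  have hs : ∀ y, gg w hw q hq0 hq1 P hP sF sE tk lv hsm j f0 ⟨lv (j+i+1), y⟩ = VJ w hw q hq0 hq1 P hP sF sE tk lv hsm j f0 (i+1) y := gg_stage w hw q hq0 hq1 P hP sF sE tk lv hsm j f0 (i+1)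
  have hset : {e : D.Boundary |
        gg w hw q hq0 hq1 P hP sF sE tk lv hsm j f0 ⟨lv (j+i+1), e.1 (lv (j+i+1))⟩
          ≠ presc sF sE tk lv j (j+i+1) (e.1 (lv (j+i+1)))}
      = {e : D.Boundary |
        VJ w hw q hq0 hq1 P hP sF sE tk lv hsm j f0 (i+1) (e.1 (lv (j+i+1)))
          ≠ presc sF sE tk lv j (j+i+1) (e.1 (lv (j+i+1)))} := by
    ext e
    simp only [Set.mem_setOf_eq, hs]
  rw [hset]
  exact VJ_bad w hw q hq0 hq1 P hP sF sE tk lv hsm j f0 i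

/-- The harmonic functions as a submodule. -/
def harmSubmodule (D : TreeData) (w : ∀ n, D.T (n + 1) → 𝔽) : Submodule 𝔽 (D.Vert → E) where
  carrier := D.harmonicSet E w
  zero_mem' := by
    intro n x
    show (0:E) = ∑ y : {y : D.T (n + 1) // D.par n y = x}, w n y.1 • (0:E)
    simp
  add_mem' := by
    intro a b ha hb n x
    show a ⟨n, x⟩ + b ⟨n, x⟩ = _
    rw [ha n x, hb n x, ← Finset.sum_add_distrib]
    exact Finset.sum_congr rfl (fun y _ => (smul_add _ _ _).symm)
  smul_mem' := by
    intro cc f hf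
    intro n x
    show cc • f ⟨n, x⟩ = _
    rw [hf n x, Finset.smul_sum]
    exact Finset.sum_congr rfl (fun y _ => (smul_comm _ _ _))

end Chunk7b


/-- For any infinite τ ⊆ ℕ, U_τ(T,E) ∪ {0} contains an 𝔽-vector
subspace of H(T,E) that is dense in H(T,E). -/
theorem universality_algebraic_genericity (D : TreeData)
    (w : ∀ n, D.T (n + 1) → 𝔽) (hw : ∀ n y, w n y ≠ 0)
    (hdist : ∀ a x y : E, dist (a + x) (a + y) = dist x y)
    (q : ∀ n, D.T (n + 1) → ℝ) (hq0 : ∀ n y, 0 < q n y)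
    (hq1 : ∀ n (x : D.T n), ∑ y : {y : D.T (n + 1) // D.par n y = x}, q n y.1 = 1)
    (P : Measure D.Boundary) [IsProbabilityMeasure P]
    (hP : ∀ n (x : D.T n), P (D.sector n x) = ENNReal.ofReal (D.pathProb q n x))
    (τ : Set ℕ) (hτ : τ.Infinite) :
    ∃ A : Submodule 𝔽 (D.Vert → E),
      (A : Set (D.Vert → E)) ⊆ D.harmonicSet E w ∧
      Dense {f : ↥(D.harmonicSet E w) | f.1 ∈ A} ∧
      ∀ f ∈ A, f ≠ 0 → D.UnivOn P τ f := by
  classical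
  haveI hsec : SecondCountableTopology E := UniformSpace.secondCountable_of_separable E
  obtain ⟨sF, hsFc, hsFd⟩ := TopologicalSpace.exists_countable_dense 𝔽
  obtain ⟨sE, hsEc, hsEd⟩ := TopologicalSpace.exists_countable_dense E
  haveI := hsFc.to_subtype
  haveI := hsEc.to_subtype
  haveI hVc : Countable D.Vert := (inferInstance : Countable (Σ n, D.T n))
  haveI : SecondCountableTopology (D.Vert → E) := inferInstance
  haveI : SecondCountableTopology ↥(D.harmonicSet E w) := inferInstance
  have hzero : (0 : D.Vert → E) ∈ D.harmonicSet E w := by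
    intro n x
    show (0:E) = ∑ y : {y : D.T (n + 1) // D.par n y = x}, w n y.1 • (0:E)
    simp
  haveI : Nonempty ↥(D.harmonicSet E w) := ⟨⟨0, hzero⟩⟩
  obtain ⟨u, hu⟩ := TopologicalSpace.exists_dense_seq ↥(D.harmonicSet E w)
  set ds : ℕ → D.Vert → E := fun j => (u (Nat.unpair j).1).1 with hds
  have hdsh : ∀ j, D.Harmonic w (ds j) := fun j => (u (Nat.unpair j).1).2
  -- countable task space and its enumeration
  haveI hTc : Countable (ℕ × sF × (Σ m, (D.T m → sE)) × ℕ) := inferInstance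
  haveI hTne : Nonempty (ℕ × sF × (Σ m, (D.T m → sE)) × ℕ) := by
    obtain ⟨a, ha⟩ := hsFd.nonempty
    obtain ⟨b, hb⟩ := hsEd.nonempty
    exact ⟨⟨0, ⟨a, ha⟩, ⟨0, fun _ => ⟨b, hb⟩⟩, 0⟩⟩
  obtain ⟨ψ, hψ⟩ := exists_surjective_nat (ℕ × sF × (Σ m, (D.T m → sE)) × ℕ)
  set tk : ℕ → ℕ × sF × (Σ m, (D.T m → sE)) × ℕ := fun s => ψ (Nat.unpair s).1 with htkdef
  have htkrec : ∀ (t : ℕ × sF × (Σ m, (D.T m → sE)) × ℕ) (N : ℕ),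
      ∃ s, N ≤ s ∧ tk s = t := by
    intro t N
    obtain ⟨k, hk⟩ := hψ t
    refine ⟨Nat.pair k N, Nat.right_le_pair k N, ?_⟩
    rw [htkdef]
    simp only [Nat.unpair_pair]
    exact hk
  -- the stage levels
  set bnd : ℕ → ℕ → ℕ :=
    fun i l => max (l + ((tk (i+1)).2.2.2 + i + 2)) ((tk (i+1)).2.2.1.1) with hbnd
  set lv : ℕ → ℕ := lev hτ bnd with hlv
  have hsm : ∀ i, lv i < lv (i+1) := by
    intro i
    have h1 : lv i < bnd i (lv i) := by
      rw [hbnd]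
      exact lt_of_lt_of_le (by omega) (le_max_left _ _)
    exact lt_trans h1 (lev_gt hτ bnd i)
  have hup : ∀ i, i ≤ lv i := lv_up hsm
  have hgap : ∀ i, lv i + ((tk (i+1)).2.2.2 + i + 2) ≤ lv (i+1) := by
    intro i
    exact le_of_lt (lt_of_le_of_lt (le_max_left _ _) (lev_gt hτ bnd i))
  have hm_le : ∀ i, (tk (i+1)).2.2.1.1 ≤ lv (i+1) := by
    intro i
    exact le_of_lt (lt_of_le_of_lt (le_max_right _ _) (lev_gt hτ bnd i))
  have hlvτ : ∀ i, lv (i+1) ∈ τ := fun i => lev_mem hτ bnd i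
  -- the generators
  set g : ℕ → D.Vert → E :=
    fun j => gg w hw q hq0 hq1 P hP sF sE tk lv hsm j (fun x => ds j ⟨lv j, x⟩) with hgdef
  have hgharm : ∀ j, D.Harmonic w (g j) :=
    fun j => gg_harmonic w hw q hq0 hq1 P hP sF sE tk lv hsm j _
  refine ⟨Submodule.span 𝔽 (Set.range g), ?_, ?_, ?_⟩
  · -- contained in the harmonic functions
    have hle : Submodule.span 𝔽 (Set.range g) ≤ harmSubmodule D w := by
      rw [Submodule.span_le]
      rintro _ ⟨j, rfl⟩
      exact hgharm j
    intro f hf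
    exact hle hf
  · -- density
    rw [dense_iff_inter_open]
    rintro U hU ⟨F, hFU⟩
    obtain ⟨V, hV, rfl⟩ := isOpen_induced_iff.mp hU
    obtain ⟨I, uu, hIu, hbox⟩ := (isOpen_pi_iff.mp hV) F.1 hFU
    set L := I.sup (fun v => v.1) with hL
    set W : Set ↥(D.harmonicSet E w) := {G | ∀ v ∈ I, G.1 v ∈ uu v} with hW
    have hWopen : IsOpen W := by
      have : W = Subtype.val ⁻¹' ((I : Set D.Vert).pi uu) := by
        ext G
        simp [hW, Set.mem_pi]
      rw [this]
      exact (isOpen_set_pi I.finite_toSet (fun v hv => (hIu v hv).1)).preimage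
        continuous_subtype_val
    have hFW : F ∈ W := fun v hv => (hIu v hv).2
    obtain ⟨k, hk⟩ := hu.exists_mem_open hWopen ⟨F, hFW⟩
    set j := Nat.pair k L with hj
    have hdsj : ds j = (u k).1 := by
      rw [hds]
      simp [hj, Nat.unpair_pair]
    have hlvL : L ≤ lv j := le_trans (Nat.right_le_pair k L) (hup j)
    have hinit : ∀ l, l ≤ lv j → ∀ x, g j ⟨l, x⟩ = (u k).1 ⟨l, x⟩ := by
      have := gg_init w hw q hq0 hq1 P hP sF sE tk lv hsm j
        (fun x => ds j ⟨lv j, x⟩) ((u k).1) (u k).2 (by rw [hdsj])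
      exact this
    refine ⟨⟨g j, hgharm j⟩, ?_, ?_⟩
    · -- in U
      show (⟨g j, hgharm j⟩ : ↥(D.harmonicSet E w)) ∈ Subtype.val ⁻¹' V
      apply hbox
      rw [Set.mem_pi]
      intro v hv
      have hvL : v.1 ≤ lv j := le_trans (Finset.le_sup (f := fun v => v.1) hv) hlvL
      have hval : g j v = (u k).1 v := by
        obtain ⟨l, x⟩ := v
        exact hinit l hvL x
      show g j v ∈ uu v
      rw [hval]
      exact hk v hv
    · exact Submodule.subset_span ⟨j, rfl⟩
  · -- universality
    intro f hf hf0
    rw [Finsupp.mem_span_range_iff_exists_finsupp] at hf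
    obtain ⟨c, hc⟩ := hf
    have hcne : c ≠ 0 := by
      rintro rfl
      rw [Finsupp.sum_zero_index] at hc
      exact hf0 hc.symm
    obtain ⟨j₀, hj₀⟩ := Finsupp.support_nonempty_iff.mpr hcne
    have hcj₀ : c j₀ ≠ 0 := Finsupp.mem_support_iff.mp hj₀
    have hfv : ∀ v, f v = ∑ j ∈ c.support, c j • g j v := by
      intro v
      rw [← hc]
      simp only [Finsupp.sum, Finset.sum_apply, Pi.smul_apply]
    intro h hmeas ε hε
    -- level approximation of h
    obtain ⟨m0, t0, ht0⟩ := levelDense P h hmeas (show (0:ℝ) < ε/8 by linarith)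
    have hsel : ∀ x : D.T m0, ∃ v : sE, dist ((v : E)) (t0 x) < ε/8 := by
      intro x
      have := (Metric.dense_iff.mp hsEd) (t0 x) (ε/8) (by linarith)
      obtain ⟨y, hy1, hy2⟩ := this
      exact ⟨⟨y, hy2⟩, Metric.mem_ball.mp hy1⟩
    choose tt htt using hsel
    set ttE : D.T m0 → E := fun x => ((tt x : E)) with httE
    have httm : Measurable (fun e : D.Boundary => ttE (e.1 m0)) := measurable_levelFun ttE
    have ht0m : Measurable (fun e : D.Boundary => t0 (e.1 m0)) := measurable_levelFun t0
    have htt_h : D.dP P (fun e => ttE (e.1 m0)) h < ε/4 := by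
      have htr := dP_triangle P httm ht0m hmeas
      have hd1 : D.dP P (fun e => ttE (e.1 m0)) (fun e => t0 (e.1 m0)) ≤ ε/8 :=
        dP_le_of_dist_le P (by linarith) (fun e => le_of_lt (htt (e.1 m0)))
      linarith
    -- choice of the scalar qc
    have hcont : ∀ x : D.T m0, Filter.Tendsto (fun a : 𝔽 => c j₀ • (a⁻¹ • ttE x))
        (𝓝 (c j₀)) (𝓝 (ttE x)) := by
      intro x
      have h1 : Filter.Tendsto (fun a : 𝔽 => a⁻¹) (𝓝 (c j₀)) (𝓝 ((c j₀))⁻¹) :=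
        Filter.Tendsto.inv₀ tendsto_id hcj₀
      have h2 : Filter.Tendsto (fun a : 𝔽 => a⁻¹ • ttE x) (𝓝 (c j₀))
          (𝓝 ((c j₀)⁻¹ • ttE x)) := h1.smul tendsto_const_nhds
      have h3 := h2.const_smul (c j₀)
      rw [smul_smul, mul_inv_cancel₀ hcj₀, one_smul] at h3
      exact h3
    have hev : ∀ᶠ a in 𝓝 (c j₀),
        (∀ x : D.T m0, dist (c j₀ • (a⁻¹ • ttE x)) (ttE x) < ε/8) ∧ a ≠ 0 := by
      refine Filter.Eventually.and ?_ ?_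
      · rw [Filter.eventually_all]
        intro x
        have := Metric.tendsto_nhds.mp (hcont x) (ε/8) (by linarith)
        exact this
      · exact IsOpen.eventually_mem isOpen_compl_singleton hcj₀
    obtain ⟨O, hOsub, hOopen, hcO⟩ := mem_nhds_iff.mp hev
    obtain ⟨qc, hqcsF, hqcO⟩ := hsFd.exists_mem_open hOopen ⟨c j₀, hcO⟩
    have hqprops := hOsub hqcO
    have hqc0 : qc ≠ 0 := hqprops.2
    -- choice of the tolerance p
    obtain ⟨p, hp⟩ := exists_pow_lt_of_lt_one (show (0:ℝ) < ε/4 by linarith)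
      (show (2⁻¹:ℝ) < 1 by norm_num)
    -- choice of the stage
    obtain ⟨s, hsge, hstk⟩ := htkrec ⟨j₀, ⟨qc, hqcsF⟩, ⟨m0, tt⟩, p⟩
      ((c.support.sup id) + 1)
    obtain ⟨i0, rfl⟩ : ∃ i0, s = i0 + 1 := ⟨s - 1, by omega⟩
    have hj_lt : ∀ j ∈ c.support, j < i0 + 1 := by
      intro j hj
      have := Finset.le_sup (f := id) hj
      simp only [id_eq] at this
      omega
    set N := lv (i0+1) with hN
    have hstkp : (tk (i0+1)).2.2.2 = p := by rw [hstk]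
    have hstkm : (tk (i0+1)).2.2.1.1 = m0 := by rw [hstk]
    have hm0N : m0 ≤ N := by
      have := hm_le i0
      rw [hstkm] at this
      exact this
    have hgapp : p + i0 + 2 ≤ N - lv i0 := by
      have := hgap i0
      rw [hstkp] at this
      omega
    -- prescribed values at stage i0+1
    have hpresc0 : ∀ j, j ≠ j₀ → presc sF sE tk lv j (i0+1) = 0 := by
      intro j hj
      rw [presc, hstk]
      exact if_neg (by intro hcond; exact hj hcond.1)
    have hpresc1 : presc sF sE tk lv j₀ (i0+1)
        = fun y => qc⁻¹ • ttE (ancB m0 N y) := by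
      rw [presc, hstk]
      exact if_pos ⟨rfl, hqc0⟩
    -- the bad set
    set Bad : Set D.Boundary := ⋃ j ∈ c.support,
      {e : D.Boundary | g j ⟨N, e.1 N⟩ ≠ presc sF sE tk lv j (i0+1) (e.1 N)} with hBad
    have hBadMeas : MeasurableSet Bad := by
      refine c.support.measurableSet_biUnion (fun j _ => ?_)
      have : {e : D.Boundary | g j ⟨N, e.1 N⟩ ≠ presc sF sE tk lv j (i0+1) (e.1 N)}
          = levelSet N {y | g j ⟨N, y⟩ ≠ presc sF sE tk lv j (i0+1) y} := rfl
      rw [this]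
      exact measurableSet_levelSet _ _
    have hBadBound : P Bad ≤ ENNReal.ofReal ((2⁻¹:ℝ)^p) := by
      have hterm : ∀ j ∈ c.support,
          P {e : D.Boundary | g j ⟨N, e.1 N⟩ ≠ presc sF sE tk lv j (i0+1) (e.1 N)}
            ≤ ENNReal.ofReal ((2⁻¹:ℝ)^(p+i0+2)) := by
        intro j hj
        have hj' : j + (i0 - j) = i0 := by
          have := hj_lt j hj; omega
        have hb := gg_bad w hw q hq0 hq1 P hP sF sE tk lv hsm j
          (fun x => ds j ⟨lv j, x⟩) (i0 - j)
        rw [hj'] at hb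
        refine le_trans hb (ENNReal.ofReal_le_ofReal ?_)
        apply pow_le_pow_of_le_one (by norm_num) (by norm_num)
        omega
      calc P Bad ≤ ∑ j ∈ c.support,
            P {e : D.Boundary | g j ⟨N, e.1 N⟩ ≠ presc sF sE tk lv j (i0+1) (e.1 N)} :=
            measure_biUnion_finset_le _ _
        _ ≤ ∑ j ∈ c.support, ENNReal.ofReal ((2⁻¹:ℝ)^(p+i0+2)) :=
            Finset.sum_le_sum hterm
        _ = ENNReal.ofReal (c.support.card * (2⁻¹:ℝ)^(p+i0+2)) := by
            rw [← ENNReal.ofReal_sum_of_nonneg (fun _ _ => by positivity)]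
            rw [Finset.sum_const, nsmul_eq_mul]
        _ ≤ ENNReal.ofReal ((2⁻¹:ℝ)^p) := by
            apply ENNReal.ofReal_le_ofReal
            have hcard : (c.support.card : ℝ) ≤ (i0+1 : ℕ) := by
              have hsub : c.support ⊆ Finset.range (i0+1) := by
                intro j hj
                exact Finset.mem_range.mpr (hj_lt j hj)
              have := Finset.card_le_card hsub
              rw [Finset.card_range] at this
              exact_mod_cast this
            have h2p : ((i0+1 : ℕ) : ℝ) ≤ (2:ℝ)^(i0+2) := by
              have h1 : (i0+1 : ℕ) < 2^(i0+1) := Nat.lt_two_pow_self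
              have h2 : (2:ℕ)^(i0+1) ≤ 2^(i0+2) :=
                Nat.pow_le_pow_right (by norm_num) (by omega)
              exact_mod_cast le_of_lt (lt_of_lt_of_le h1 h2)
            have hkey : ((i0+1 : ℕ) : ℝ) * (2⁻¹:ℝ)^(i0+2) ≤ 1 := by
              rw [inv_pow, ← div_eq_mul_inv, div_le_one (by positivity)]
              exact h2p
            calc (c.support.card : ℝ) * (2⁻¹:ℝ)^(p+i0+2)
                = ((c.support.card : ℝ) * (2⁻¹:ℝ)^(i0+2)) * (2⁻¹:ℝ)^p := by
                  rw [pow_add, pow_add]; ring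
              _ ≤ 1 * (2⁻¹:ℝ)^p := by
                  apply mul_le_mul_of_nonneg_right _ (by positivity)
                  calc (c.support.card : ℝ) * (2⁻¹:ℝ)^(i0+2)
                      ≤ ((i0+1 : ℕ) : ℝ) * (2⁻¹:ℝ)^(i0+2) :=
                        mul_le_mul_of_nonneg_right hcard (by positivity)
                    _ ≤ 1 := hkey
              _ = (2⁻¹:ℝ)^p := one_mul _
    -- off the bad set the combination equals the target
    set target2 : D.Boundary → E := fun e => c j₀ • (qc⁻¹ • ttE (e.1 m0)) with htarget2
    have hsubBad : {e : D.Boundary | D.omegaMap f N e ≠ target2 e} ⊆ Bad := by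
      intro e he
      by_contra hnot
      apply he
      have hallj : ∀ j ∈ c.support,
          g j ⟨N, e.1 N⟩ = presc sF sE tk lv j (i0+1) (e.1 N) := by
        intro j hj
        by_contra hne
        exact hnot (Set.mem_biUnion hj hne)
      have : D.omegaMap f N e = f ⟨N, e.1 N⟩ := rfl
      rw [this, hfv ⟨N, e.1 N⟩]
      rw [Finset.sum_congr rfl (fun j hj => by rw [hallj j hj])]
      rw [Finset.sum_eq_single j₀]
      · rw [hpresc1]
        simp only [ancB_boundary e N m0 hm0N]
        rfl
      · intro j hj hjne
        rw [hpresc0 j hjne]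
        simp
      · intro habs
        exact absurd hj₀ habs
    have homem : Measurable (D.omegaMap f N) := measurable_levelFun (fun y => f ⟨N, y⟩)
    have htgm : Measurable target2 := measurable_levelFun (fun y => c j₀ • (qc⁻¹ • ttE y))
    have h1 : D.dP P (D.omegaMap f N) target2 < ε/4 := by
      have hle := dP_le_measure P hBadMeas hsubBad
      have h2 : (P Bad).toReal ≤ (2⁻¹:ℝ)^p := by
        have := ENNReal.toReal_mono ENNReal.ofReal_ne_top hBadBound
        rwa [ENNReal.toReal_ofReal (by positivity)] at this
      linarith
    have h2 : D.dP P target2 (fun e => ttE (e.1 m0)) ≤ ε/8 := by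
      apply dP_le_of_dist_le P (by linarith)
      intro e
      exact le_of_lt (hqprops.1 (e.1 m0))
    have htri1 := dP_triangle P homem htgm httm
    have htri2 := dP_triangle P homem httm hmeas
    exact ⟨N, hlvτ i0, by linarith⟩
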